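/- Let k be a field and let R be a finitely generated commutative k-algebra. Then the set of idempotent elements of R (elements e with e * e = e) is finite. -/

import Mathlib

open TopologicalSpace

lemma clopen_eq_sUnion_irreducibleComponents {X : Type*} [TopologicalSpace X]
    {s : Set X} (hs : IsClopen s) :
    s = ⋃₀ {Z ∈ irreducibleComponents X | Z ⊆ s} := by
  apply subset_antisymm
  · intro x hx
    refine ⟨irreducibleComponent x, ⟨irreducibleComponent_mem_irreducibleComponents x, ?_⟩,
      mem_irreducibleComponent⟩
    by_contra h
    obtain ⟨y, hy, hy'⟩ := Set.not_subset.mp h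
    obtain ⟨z, hz⟩ := (isIrreducible_irreducibleComponent (x := x)).2 s sᶜ hs.2
      hs.1.isOpen_compl ⟨x, mem_irreducibleComponent, hx⟩ ⟨y, hy, hy'⟩
    exact hz.2.2 hz.2.1
  · rintro x ⟨Z, ⟨_, hZs⟩, hx⟩
    exact hZs hx

lemma finite_clopens_of_noetherianSpace (X : Type*) [TopologicalSpace X]
    [NoetherianSpace X] : Finite (Clopens X) := by
  have hfin : (irreducibleComponents X).Finite :=
    NoetherianSpace.finite_irreducibleComponents
  have : Finite (irreducibleComponents X) := hfin
  refine Finite.of_injective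
    (fun s : Clopens X => ({Z | (Z : Set X) ⊆ s} : Set (irreducibleComponents X)))
    fun s t h => ?_
  ext1
  rw [clopen_eq_sUnion_irreducibleComponents s.isClopen,
    clopen_eq_sUnion_irreducibleComponents t.isClopen]
  refine congrArg Set.sUnion ?_
  apply Set.ext
  intro Z
  constructor
  · rintro ⟨hZ, hZs⟩
    exact ⟨hZ, Set.ext_iff.mp h ⟨Z, hZ⟩ |>.mp hZs⟩
  · rintro ⟨hZ, hZt⟩
    exact ⟨hZ, Set.ext_iff.mp h ⟨Z, hZ⟩ |>.mpr hZt⟩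

/-- If `k` is a field and `R` a finitely generated commutative
`k`-algebra, then the set of idempotent elements of `R` is finite. -/
theorem idempotents_finite_of_finitely_generated
    (k : Type*) [Field k] (R : Type*) [CommRing R] [Algebra k R]
    (hfg : Algebra.FiniteType k R) :
    {e : R | e * e = e}.Finite := by
  have : IsNoetherianRing R := haveI := hfg; Algebra.FiniteType.isNoetherianRing k R
  have : Finite (Clopens (PrimeSpectrum R)) := finite_clopens_of_noetherianSpace _
  have : Finite {e : R | IsIdempotentElem e} :=
    Finite.of_equiv _ PrimeSpectrum.isIdempotentElemEquivClopens.symm.toEquiv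
  show Set.Finite {e : R | IsIdempotentElem e}
  exact Set.toFinite _
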